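/- arXiv:2307.15340 — 3 statements merged into one kernel-verified Lean document; each statement's English description precedes it below -/
import Mathlib

section
/- Let p₁, p₂ be coprime positive integers and d a natural number, and let f be a mixed polynomial that is radially weighted homogeneous with weight vector (p₁,p₂) and radial degree d. Then: (i) if p₁ is even, then f(u,−v) = (−1)^d · f(u,v) for all u,v ∈ ℂ; (ii) if p₂ is even, then f(−u,v) = (−1)^d · f(u,v) for all u,v ∈ ℂ; (iii) if p₁ and p₂ are both odd, then f(−u,−v) = (−1)^d · f(u,v) for all u,v ∈ ℂ. Consequently the zero set V_f is u-even in case (i), v-even in case (ii), and odd in case (iii). -/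
/-- A mixed polynomial that is radially weighted homogeneous with
coprime positive weight vector `(p₁, p₂)` and radial degree `d` satisfies the
symmetry `f(u,-v) = (-1)^d f(u,v)` when `p₁` is even, `f(-u,v) = (-1)^d f(u,v)`
when `p₂` is even, and `f(-u,-v) = (-1)^d f(u,v)` when both are odd; hence the
zero set is u-even, v-even or odd, respectively. -/
theorem stmt_0 (p₁ p₂ : ℕ) (hp₁ : 0 < p₁) (hp₂ : 0 < p₂)
    (hcop : Nat.Coprime p₁ p₂) (d : ℕ)
    (S : Finset (ℕ × ℕ × ℕ × ℕ)) (c : ℕ × ℕ × ℕ × ℕ → ℂ)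
    (f : ℂ → ℂ → ℂ)
    (hf : ∀ u v : ℂ, f u v =
      ∑ q ∈ S, c q * u ^ q.1 * (starRingEnd ℂ u) ^ q.2.1 *
        v ^ q.2.2.1 * (starRingEnd ℂ v) ^ q.2.2.2)
    (hhom : ∀ q ∈ S, p₁ * (q.1 + q.2.1) + p₂ * (q.2.2.1 + q.2.2.2) = d) :
    (Even p₁ →
      (∀ u v : ℂ, f u (-v) = (-1 : ℂ) ^ d * f u v) ∧
      (∀ u v : ℂ, f u v = 0 ↔ f u (-v) = 0)) ∧
    (Even p₂ →
      (∀ u v : ℂ, f (-u) v = (-1 : ℂ) ^ d * f u v) ∧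
      (∀ u v : ℂ, f u v = 0 ↔ f (-u) v = 0)) ∧
    (Odd p₁ → Odd p₂ →
      (∀ u v : ℂ, f (-u) (-v) = (-1 : ℂ) ^ d * f u v) ∧
      (∀ u v : ℂ, f u v = 0 ↔ f (-u) (-v) = 0)) := by
  have hne : ((-1 : ℂ) ^ d) ≠ 0 := pow_ne_zero _ (by norm_num)
  refine ⟨fun hE => ?_, fun hE => ?_, fun hO₁ hO₂ => ?_⟩
  · have hO₂ : Odd p₂ := by
      rcases Nat.even_or_odd p₂ with h | h
      · have : (2 : ℕ) ∣ 1 := hcop ▸ Nat.dvd_gcd hE.two_dvd h.two_dvd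
        omega
      · exact h
    have main : ∀ u v : ℂ, f u (-v) = (-1 : ℂ) ^ d * f u v := by
      intro u v
      rw [hf, hf u v, Finset.mul_sum]
      refine Finset.sum_congr rfl fun q hq => ?_
      have hd : ((-1 : ℂ)) ^ d = (-1) ^ (q.2.2.1 + q.2.2.2) := by
        rw [← hhom q hq, pow_add, pow_mul, pow_mul, hE.neg_one_pow,
          hO₂.neg_one_pow, one_pow, one_mul]
      rw [hd, map_neg, neg_pow, neg_pow, pow_add]; ring
    exact ⟨main, fun u v => by rw [main, mul_eq_zero]; simp [hne]⟩
  · have hO₁ : Odd p₁ := by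
      rcases Nat.even_or_odd p₁ with h | h
      · have : (2 : ℕ) ∣ 1 := hcop ▸ Nat.dvd_gcd h.two_dvd hE.two_dvd
        omega
      · exact h
    have main : ∀ u v : ℂ, f (-u) v = (-1 : ℂ) ^ d * f u v := by
      intro u v
      rw [hf, hf u v, Finset.mul_sum]
      refine Finset.sum_congr rfl fun q hq => ?_
      have hd : ((-1 : ℂ)) ^ d = (-1) ^ (q.1 + q.2.1) := by
        rw [← hhom q hq, pow_add, pow_mul, pow_mul, hE.neg_one_pow,
          hO₁.neg_one_pow, one_pow, mul_one]
      rw [hd, map_neg, neg_pow, neg_pow, pow_add]; ring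
    exact ⟨main, fun u v => by rw [main, mul_eq_zero]; simp [hne]⟩
  · have main : ∀ u v : ℂ, f (-u) (-v) = (-1 : ℂ) ^ d * f u v := by
      intro u v
      rw [hf, hf u v, Finset.mul_sum]
      refine Finset.sum_congr rfl fun q hq => ?_
      have hd : ((-1 : ℂ)) ^ d = (-1) ^ (q.1 + q.2.1) * (-1) ^ (q.2.2.1 + q.2.2.2) := by
        rw [← hhom q hq, pow_add, pow_mul, pow_mul, hO₁.neg_one_pow,
          hO₂.neg_one_pow]
      rw [hd, map_neg, map_neg, neg_pow, neg_pow, neg_pow, neg_pow,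
        pow_add, pow_add]; ring
    exact ⟨main, fun u v => by rw [main, mul_eq_zero]; simp [hne]⟩
end

section
/- Let p₁, p₂ be coprime positive integers with p₁ odd, and write p₂ = 2^K · m with m odd (so 2^K is the largest power of 2 dividing p₂). Let f be a radially weighted homogeneous semiholomorphic polynomial with weight vector (p₁,p₂) and radial degree d. Then there exists λ ∈ ℂ with |λ| = 1 such that f(e^{iπ/2^K}·u, −v) = λ · f(u,v) for all u,v ∈ ℂ; in particular the zero set of f is invariant under the transformation τ_{2^K}(u,v) = (e^{iπ/2^K}·u, −v). -/
/-- If `f` is a radially weighted homogeneous semiholomorphic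
polynomial with weight vector `(p₁, p₂)`, `p₁` odd, `p₂ = 2^K * m` with `m`
odd, and radial degree `d`, then there is a unit complex number `l` such that
`f(e^{iπ/2^K} u, -v) = l * f(u,v)` for all `u, v`; in particular the zero set
of `f` is invariant under `τ_{2^K}(u,v) = (e^{iπ/2^K} u, -v)`. -/
theorem stmt_1 (p₁ p₂ : ℕ) (hp₁ : 0 < p₁) (hp₂ : 0 < p₂)
    (hcop : Nat.Coprime p₁ p₂) (hp₁odd : Odd p₁)
    (K m : ℕ) (hm : Odd m) (hp₂eq : p₂ = 2 ^ K * m)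
    (d : ℕ)
    (S : Finset (ℕ × ℕ × ℕ)) (c : ℕ × ℕ × ℕ → ℂ)
    (f : ℂ → ℂ → ℂ)
    (hf : ∀ u v : ℂ, f u v =
      ∑ q ∈ S, c q * u ^ q.1 * v ^ q.2.1 * (starRingEnd ℂ v) ^ q.2.2)
    (hhom : ∀ q ∈ S, p₁ * q.1 + p₂ * (q.2.1 + q.2.2) = d) :
    ∃ l : ℂ, ‖l‖ = 1 ∧
      (∀ u v : ℂ,
        f (Complex.exp (Real.pi * Complex.I / 2 ^ K) * u) (-v) = l * f u v) ∧
      (∀ u v : ℂ,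
        f u v = 0 ↔
          f (Complex.exp (Real.pi * Complex.I / 2 ^ K) * u) (-v) = 0) := by
  set n := 2 ^ (K + 1) with hn
  set a := d * p₁ ^ (n.totient - 1) with ha
  have hcop2 : Nat.Coprime p₁ n := by
    rw [hn]
    exact (hp₁odd.coprime_two_right).pow_right _
  have hnt : 1 ≤ n.totient := Nat.totient_pos.mpr (by positivity)
  have hda : p₁ * a ≡ d [MOD n] := by
    have hT : n.totient - 1 + 1 = n.totient := Nat.succ_pred_eq_of_pos hnt
    calc p₁ * a = d * p₁ ^ (n.totient - 1 + 1) := by rw [ha, pow_succ]; ring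
      _ = d * p₁ ^ n.totient := by rw [hT]
      _ ≡ d * 1 [MOD n] := Nat.ModEq.mul_left d (Nat.ModEq.pow_totient hcop2)
      _ = d := mul_one d
  -- key congruence for each exponent triple
  have key : ∀ q ∈ S, q.1 + 2 ^ K * (q.2.1 + q.2.2) ≡ a [MOD n] := by
    intro q hq
    have h1 : p₁ * (q.1 + 2 ^ K * (q.2.1 + q.2.2)) ≡ p₁ * a [MOD n] := by
      have hd := hhom q hq
      rw [Nat.modEq_iff_dvd]
      have h2 : (2 : ℤ) ∣ (p₁ : ℤ) - m := by
        rcases hp₁odd with ⟨x, hx⟩; rcases hm with ⟨y, hy⟩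
        exact ⟨x - y, by push_cast [hx, hy]; ring⟩
      obtain ⟨t, ht⟩ := h2
      have e1 : (p₁ : ℤ) * a - p₁ * (q.1 + 2 ^ K * (q.2.1 + q.2.2))
          = ((p₁ : ℤ) * a - d) - 2 ^ K * (q.2.1 + q.2.2) * ((p₁ : ℤ) - m) := by
        have : (p₁ : ℤ) * q.1 + (2 ^ K * m) * (q.2.1 + q.2.2) = d := by
          exact_mod_cast hp₂eq ▸ hd
        linear_combination -this
      push_cast
      rw [e1]
      have hdvd1 : (n : ℤ) ∣ (p₁ : ℤ) * a - d := by
        have h := Nat.modEq_iff_dvd.mp hda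
        push_cast at h
        exact dvd_sub_comm.mp h
      refine dvd_sub hdvd1 ?_
      rw [ht, hn]
      exact ⟨(q.2.1 + q.2.2) * t, by push_cast; ring⟩
    exact Nat.ModEq.cancel_left_of_coprime (by rwa [Nat.coprime_comm] at hcop2) h1
  set E : ℂ := Complex.exp (Real.pi * Complex.I / 2 ^ K) with hE
  set l : ℂ := Complex.exp (Real.pi * Complex.I * a / 2 ^ K) with hl
  have habs : ‖l‖ = 1 := by
    have hrw : (Real.pi : ℂ) * Complex.I * a / 2 ^ K
        = ((Real.pi * a / 2 ^ K : ℝ) : ℂ) * Complex.I := by push_cast; ring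
    rw [hl, hrw, Complex.norm_exp_ofReal_mul_I]
  -- per-term factor
  have hfactor : ∀ q ∈ S, E ^ q.1 * (-1 : ℂ) ^ (q.2.1 + q.2.2) = l := by
    intro q hq
    have h1 : E ^ q.1 * (-1 : ℂ) ^ (q.2.1 + q.2.2)
        = Complex.exp (Real.pi * Complex.I * (q.1 + 2 ^ K * (q.2.1 + q.2.2)) / 2 ^ K) := by
      rw [hE, ← Complex.exp_pi_mul_I, ← Complex.exp_nat_mul, ← Complex.exp_nat_mul,
        ← Complex.exp_add]
      congr 1
      have h2K : (2 : ℂ) ^ K ≠ 0 := pow_ne_zero _ two_ne_zero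
      field_simp
      push_cast
      ring
    rw [h1, hl]
    rw [Complex.exp_eq_exp_iff_exists_int]
    obtain ⟨t, ht⟩ := (Nat.modEq_iff_dvd.mp (key q hq))
    refine ⟨-t, ?_⟩
    have h2K : (2 : ℂ) ^ K ≠ 0 := pow_ne_zero _ two_ne_zero
    have ht' : (a : ℂ) - (q.1 + 2 ^ K * (q.2.1 + q.2.2)) = n * t := by
      exact_mod_cast congrArg (Int.cast : ℤ → ℂ) ht
    rw [hn] at ht'
    push_cast at ht'
    push_cast
    field_simp
    linear_combination (-1 : ℂ) * ht'
  have main : ∀ u v : ℂ, f (E * u) (-v) = l * f u v := by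
    intro u v
    rw [hf, hf, Finset.mul_sum]
    refine Finset.sum_congr rfl fun q hq => ?_
    have : (starRingEnd ℂ) (-v) = -(starRingEnd ℂ) v := by simp
    rw [this, mul_pow, neg_pow, neg_pow ((starRingEnd ℂ) v)]
    rw [← hfactor q hq]
    ring
  refine ⟨l, habs, main, fun u v => ?_⟩
  rw [main u v]
  constructor
  · intro h; rw [h, mul_zero]
  · intro h
    have hl0 : l ≠ 0 := by
      intro h0; rw [h0] at habs; simp at habs
    exact (mul_eq_zero.mp h).resolve_left hl0
end

section
/- There do not exist a polynomial F ∈ (ZMod 2)[X], an odd natural number λ, and natural numbers m, m′ such that X^m · (X⁶ + X³ + 1) = X^{m′} · F² · (1 + X + X² + ⋯ + X^{λ−1}) holds in (ZMod 2)[X]. -/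
open Polynomial

/-- There is no factorization
`X^m (X⁶ + X³ + 1) = X^{m'} F² (1 + X + ⋯ + X^{λ-1})` with `λ` odd in
`(ZMod 2)[X]`; i.e. the mod-2 Alexander polynomial of `8₁₆` does not satisfy
Murasugi's condition. -/
theorem stmt_10 :
    ¬ ∃ (F : Polynomial (ZMod 2)) (l m m' : ℕ), Odd l ∧
      X ^ m * (X ^ 6 + X ^ 3 + 1) =
        X ^ m' * F ^ 2 * (∑ i ∈ Finset.range l, X ^ i) := by
  rintro ⟨F, l, m, m', -, hE⟩
  set q : (ZMod 2)[X] := X ^ 6 + X ^ 3 + 1 with hqdef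
  set S : (ZMod 2)[X] := ∑ i ∈ Finset.range l, X ^ i with hSdef
  have h2 : (2 : (ZMod 2)[X]) = 0 := by
    have h : ((2:ℕ) : (ZMod 2)[X]) = C ((2:ℕ) : ZMod 2) := by rw [Polynomial.C_eq_natCast]
    have h2' : ((2:ℕ) : ZMod 2) = 0 := by decide
    rw [h2', map_zero] at h
    exact_mod_cast h
  have hqne : q ≠ 0 := by
    intro h
    have := congrArg (eval 0) h
    simp [hqdef, eval_add, eval_pow, eval_X, eval_one] at this
  have hq1 : q - 1 = X ^ 3 * (X - 1) * (X ^ 2 + X + 1) := by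
    rw [hqdef]; linear_combination (X:(ZMod 2)[X]) ^ 3 * h2
  have hcopqX : IsCoprime q (X : (ZMod 2)[X]) := ⟨1, -(X ^ 5 + X ^ 2), by rw [hqdef]; ring⟩
  have hcopqX1 : IsCoprime q ((X : (ZMod 2)[X]) - 1) :=
    ⟨1, -(X ^ 3 * (X ^ 2 + X + 1)), by linear_combination hq1⟩
  have hderiv : derivative q = X ^ 2 := by
    rw [hqdef]
    simp [derivative_X_pow, show ((6:ZMod 2)) = 0 from by decide,
      show ((3:ZMod 2)) = 1 from by decide]
    rw [show (C (5:ZMod 2) + 1) = 0 from by rw [show (5:ZMod 2) = 1 from by decide, map_one, one_add_one_eq_two, h2], show (C (2:ZMod 2) + 1) = 1 from by rw [show (2:ZMod 2) = 0 from by decide, map_zero, zero_add]]; ring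
  have hsep : q.Separable := (Polynomial.separable_def q).mpr (by
    rw [hderiv]; exact hcopqX.pow_right)
  have hsq : Squarefree q := hsep.squarefree
  have hq9n : ∀ n : ℕ, q ∣ (X : (ZMod 2)[X]) ^ (9 * n) - 1 := by
    intro n
    refine ⟨(X ^ 3 - 1) * ∑ i ∈ Finset.range n, ((X:(ZMod 2)[X]) ^ 9) ^ i, ?_⟩
    have hg := geom_sum_mul ((X:(ZMod 2)[X]) ^ 9) n
    rw [pow_mul, hqdef]
    linear_combination -hg
  by_cases h3 : 3 ∣ l
  · -- case 3 ∣ l : X^2+X+1 divides S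
    obtain ⟨k, hk⟩ := h3
    set T : (ZMod 2)[X] := ∑ t ∈ Finset.range k, ((X:(ZMod 2)[X]) ^ 3) ^ t with hTdef
    have hX1ne : ((X : (ZMod 2)[X]) - 1) ≠ 0 := fun h => by
      have := congrArg (eval 0) h
      simp at this
    have hS : S = (X ^ 2 + X + 1) * T := by
      apply mul_right_cancel₀ hX1ne
      have h1 := geom_sum_mul (X : (ZMod 2)[X]) l
      have h2' := geom_sum_mul ((X:(ZMod 2)[X]) ^ 3) k
      rw [← hSdef] at h1
      rw [h1, hk, pow_mul]
      linear_combination -h2'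
    have hrq : ((X:(ZMod 2)[X]) ^ 2 + X + 1) ∣ X ^ m * q :=
      ⟨X ^ m' * F ^ 2 * T, by rw [hE, hS]; ring⟩
    have hr1 : ((X:(ZMod 2)[X]) ^ 2 + X + 1) ∣ X ^ m * (q - 1) :=
      ⟨X ^ m * X ^ 3 * (X - 1), by rw [hq1]; ring⟩
    have hrXm : ((X:(ZMod 2)[X]) ^ 2 + X + 1) ∣ X ^ m := by
      have h := dvd_sub hrq hr1
      have he : (X:(ZMod 2)[X]) ^ m * q - X ^ m * (q - 1) = X ^ m := by ring
      rwa [he] at h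
    have hr3m : ((X:(ZMod 2)[X]) ^ 2 + X + 1) ∣ X ^ (3 * m) - 1 := by
      refine ⟨(X - 1) * ∑ i ∈ Finset.range m, ((X:(ZMod 2)[X]) ^ 3) ^ i, ?_⟩
      have hg := geom_sum_mul ((X:(ZMod 2)[X]) ^ 3) m
      rw [pow_mul]
      linear_combination -hg
    have hr3m' : ((X:(ZMod 2)[X]) ^ 2 + X + 1) ∣ X ^ (3 * m) :=
      hrXm.trans (pow_dvd_pow X (by omega))
    have hone : ((X:(ZMod 2)[X]) ^ 2 + X + 1) ∣ 1 := by
      have h := dvd_sub hr3m' hr3m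
      have he : (X:(ZMod 2)[X]) ^ (3*m) - (X ^ (3*m) - 1) = 1 := by ring
      rwa [he] at h
    have hdeg : degree ((X:(ZMod 2)[X]) ^ 2 + X + 1) = 0 :=
      degree_eq_zero_of_isUnit (isUnit_of_dvd_one hone)
    have hdeg2 : degree ((X:(ZMod 2)[X]) ^ 2 + X + 1) = 2 := by compute_degree!
    rw [hdeg2] at hdeg
    exact (by norm_num : (2 : WithBot ℕ) ≠ 0) hdeg
  · -- case 3 ∤ l
    obtain ⟨u, v, huv⟩ : ∃ u v, l * u = 9 * v + 1 := by
      rcases (by omega : l % 9 = 1 ∨ l % 9 = 2 ∨ l % 9 = 4 ∨ l % 9 = 5 ∨ l % 9 = 7 ∨ l % 9 = 8)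
        with h|h|h|h|h|h
      · exact ⟨1, (l * 1 - 1) / 9, by omega⟩
      · exact ⟨5, (l * 5 - 1) / 9, by omega⟩
      · exact ⟨7, (l * 7 - 1) / 9, by omega⟩
      · exact ⟨2, (l * 2 - 1) / 9, by omega⟩
      · exact ⟨4, (l * 4 - 1) / 9, by omega⟩
      · exact ⟨8, (l * 8 - 1) / 9, by omega⟩
    obtain ⟨d, hd⟩ := hq9n v
    set Tu : (ZMod 2)[X] := ∑ t ∈ Finset.range u, ((X:(ZMod 2)[X]) ^ l) ^ t with hTudef
    have hXl : S * (X - 1) * Tu = X * (q * d) + (X - 1) := by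
      rw [← hd]
      have h1 := geom_sum_mul (X : (ZMod 2)[X]) l
      rw [← hSdef] at h1
      have hg := geom_sum_mul ((X:(ZMod 2)[X]) ^ l) u
      calc S * (X - 1) * Tu = Tu * (X ^ l - 1) := by rw [← h1]; ring
        _ = (X ^ l) ^ u - 1 := hg
        _ = X ^ (9 * v + 1) - 1 := by rw [← pow_mul, huv]
        _ = X * ((X:(ZMod 2)[X]) ^ (9 * v) - 1) + (X - 1) := by ring
    have hcopqS : IsCoprime q S :=
      ⟨1 + X ^ 4 * (X ^ 2 + X + 1) * d, -(X ^ 3 * (X ^ 2 + X + 1) * ((X - 1) * Tu)),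
        by linear_combination hq1 - (X:(ZMod 2)[X]) ^ 3 * (X ^ 2 + X + 1) * hXl⟩
    have hdvd : q ∣ (X ^ m' * S) * F ^ 2 := ⟨X ^ m, by linear_combination -hE⟩
    have hcop' : IsCoprime q ((X:(ZMod 2)[X]) ^ m' * S) := (hcopqX.pow_right).mul_right hcopqS
    have hqF2 : q ∣ F ^ 2 := hcop'.dvd_of_dvd_mul_left hdvd
    have hqF : q ∣ F := (hsq.dvd_pow_iff_dvd two_ne_zero).mp hqF2
    obtain ⟨G, hG⟩ := hqF
    have hcanc : (X:(ZMod 2)[X]) ^ m = q * (X ^ m' * G ^ 2 * S) := by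
      apply mul_left_cancel₀ hqne
      linear_combination hE + (X:(ZMod 2)[X]) ^ m' * S * (F + q * G) * hG
    have hqXm : q ∣ (X:(ZMod 2)[X]) ^ (9 * m) :=
      (Dvd.intro _ hcanc.symm).trans (pow_dvd_pow X (by omega))
    have hone : q ∣ (1 : (ZMod 2)[X]) := by
      have h := dvd_sub hqXm (hq9n m)
      have he : (X:(ZMod 2)[X]) ^ (9*m) - (X ^ (9*m) - 1) = 1 := by ring
      rwa [he] at h
    have hdeg : degree q = 0 := degree_eq_zero_of_isUnit (isUnit_of_dvd_one hone)
    have hdeg6 : degree q = 6 := by rw [hqdef]; compute_degree!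
    rw [hdeg6] at hdeg
    exact (by norm_num : (6 : WithBot ℕ) ≠ 0) hdeg
end
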